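/- For every i ≥ 0, gcd(N_i - (p^(p^i) - 1), N_0 N_1 ⋯ N_i) = 1. -/

import Mathlib

lemma modeq_sum_aux {n : ℕ} (s : Finset ℕ) (f g : ℕ → ℕ)
    (h : ∀ x ∈ s, f x ≡ g x [MOD n]) :
    (∑ x ∈ s, f x) ≡ (∑ x ∈ s, g x) [MOD n] := by
  classical
  induction s using Finset.induction_on with
  | empty => rfl
  | insert _ _ hx ih =>
    rw [Finset.sum_insert hx, Finset.sum_insert hx]
    exact (h _ (Finset.mem_insert_self _ _)).add
      (ih fun x hxs => h x (Finset.mem_insert_of_mem hxs))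

lemma geom_dvd (x n : ℕ) : (∑ j ∈ Finset.range n, x ^ j) ∣ x ^ n - 1 := by
  rcases Nat.eq_zero_or_pos x with rfl | hx
  · rcases Nat.eq_zero_or_pos n with rfl | hn
    · simp
    · have : (∑ j ∈ Finset.range n, (0:ℕ) ^ j) = 1 := by
        rw [Finset.sum_eq_single_of_mem 0 (Finset.mem_range.mpr hn)]
        · simp
        · intro j _ hj; exact Nat.zero_pow (Nat.pos_of_ne_zero hj)
      simp [this]
  · have hz : ((x ^ n - 1 : ℕ) : ℤ) = (x : ℤ) ^ n - 1 := by
      push_cast [Nat.one_le_iff_ne_zero.mpr (pow_pos hx n).ne']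
      ring
    have : ((∑ j ∈ Finset.range n, x ^ j : ℕ) : ℤ) ∣ (x : ℤ) ^ n - 1 := by
      push_cast
      exact ⟨(x:ℤ) - 1, (geom_sum_mul (x : ℤ) n).symm⟩
    rw [← hz] at this
    exact_mod_cast this

theorem gcd_N_sub_with_prod_N (p : ℕ) (hp : p.Prime) (i : ℕ) :
    Nat.gcd ((∑ j ∈ Finset.range p, (p ^ p ^ i) ^ j) - (p ^ p ^ i - 1))
      (∏ k ∈ Finset.range (i + 1), ∑ j ∈ Finset.range p, (p ^ p ^ k) ^ j) = 1 := by
  have hp2 := hp.two_le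
  set q := p ^ p ^ i with hq_def
  set N : ℕ → ℕ := fun k => ∑ j ∈ Finset.range p, (p ^ p ^ k) ^ j with hN
  set A := N i - (q - 1) with hA
  have hq2 : 2 ≤ q := le_trans hp2 (Nat.le_self_pow (Nat.pos_of_ne_zero (pow_ne_zero i hp.pos.ne')).ne' p)
  -- N i ≥ q
  have hNge : q ≤ N i := by
    have h1 : (1 : ℕ) ∈ Finset.range p := Finset.mem_range.mpr (by omega)
    calc q = q ^ 1 := (pow_one q).symm
      _ ≤ ∑ j ∈ Finset.range p, q ^ j :=
        Finset.single_le_sum (fun j _ => Nat.zero_le _) h1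
  -- p coprime to q - 1
  have hpq : Nat.Coprime p (q - 1) := by
    refine (hp.coprime_iff_not_dvd).mpr fun hdvd => ?_
    have hpq' : p ∣ q := dvd_pow_self p (pow_ne_zero i hp.pos.ne')
    have : p ∣ q - (q - 1) := Nat.dvd_sub hpq' hdvd
    rw [Nat.sub_sub_self (by omega)] at this
    exact Nat.Prime.one_lt hp |>.ne' (Nat.dvd_one.mp this)
  -- N i ≡ p [MOD q - 1]
  have hmodq : q ≡ 1 [MOD q - 1] :=
    ((Nat.modEq_iff_dvd' (by omega)).mpr dvd_rfl).symm
  have hNmod : N i ≡ p [MOD q - 1] := by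
    have : N i ≡ ∑ _j ∈ Finset.range p, 1 [MOD q - 1] :=
      modeq_sum_aux _ _ _ (fun j _ => by simpa using hmodq.pow j)
    simpa using this
  -- gcd (N i) (q-1) = 1
  have hgcdN : Nat.gcd (N i) (q - 1) = 1 := by
    rw [hNmod.gcd_eq]
    exact hpq
  -- coprime A (q-1)
  have hAq : Nat.Coprime A (q - 1) := by
    have hAN : A ≡ N i [MOD q - 1] := by
      refine (Nat.modEq_iff_dvd' (Nat.sub_le _ _)).mpr ?_
      rw [Nat.sub_sub_self (by omega : q - 1 ≤ N i)]
    unfold Nat.Coprime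
    rw [hAN.gcd_eq, hgcdN]
  -- coprime A (N i)
  have hANi : Nat.Coprime A (N i) := by
    have : N i = (q - 1) + A := by rw [hA]; omega
    rw [this]
    exact Nat.coprime_add_self_right.mpr hAq
  -- for k < i : N k ∣ q - 1
  have hNk : ∀ k < i, N k ∣ q - 1 := by
    intro k hk
    have h1 : N k ∣ p ^ p ^ (k + 1) - 1 := by
      have := geom_dvd (p ^ p ^ k) p
      rwa [← pow_mul, ← pow_succ] at this
    have h2 : p ^ p ^ (k + 1) - 1 ∣ q - 1 := by
      obtain ⟨c, hc⟩ := pow_dvd_pow p (Nat.succ_le_of_lt hk : k + 1 ≤ i)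
      have := Nat.sub_dvd_pow_sub_pow (p ^ p ^ (k + 1)) 1 c
      rwa [one_pow, ← pow_mul, ← hc] at this
    exact h1.trans h2
  -- conclude
  change Nat.gcd A _ = 1
  refine Nat.Coprime.prod_right fun k hk => ?_
  rcases Nat.lt_succ_iff_lt_or_eq.mp (Finset.mem_range.mp hk) with h | rfl
  · exact Nat.Coprime.coprime_dvd_right (hNk k h) hAq
  · exact hANi
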